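/- Define g : ℤ → ℂ by g(j) = e^{−j²}. Then for all positive integers M and N, the Gabor system {E_{m/M}T_{nN}g : n ∈ ℤ, m ∈ {0,…,M−1}}, where (E_{m/M}T_{nN}g)(j) = e^{2πijm/M} e^{−(j−nN)²}, is linearly independent in ℓ²(ℤ). -/

import Mathlib

open Complex Finset

lemma vand {ι : Type*} [DecidableEq ι] (s : Finset ι) (t : ι → ℂ) (ht : Set.InjOn t s)
    (A : ι → ℂ) (h : ∀ k : ℕ, ∑ i ∈ s, A i * t i ^ k = 0) :
    ∀ i ∈ s, A i = 0 := by
  have hP : ∀ P : Polynomial ℂ, ∑ j ∈ s, A j * P.eval (t j) = 0 := by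
    intro P
    have he : ∀ j, P.eval (t j) =
        ∑ k ∈ Finset.range (P.natDegree + 1), P.coeff k * t j ^ k := fun j =>
      Polynomial.eval_eq_sum_range _
    calc ∑ j ∈ s, A j * P.eval (t j)
        = ∑ k ∈ Finset.range (P.natDegree + 1), P.coeff k * ∑ j ∈ s, A j * t j ^ k := by
          simp_rw [he, Finset.mul_sum]
          rw [Finset.sum_comm]
          apply Finset.sum_congr rfl; intro k _
          apply Finset.sum_congr rfl; intro j _
          ring
      _ = 0 := by simp [h]
  intro i hi
  have := hP (Lagrange.basis s t i)
  rw [Finset.sum_eq_single i] at this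
  · rwa [Lagrange.eval_basis_self ht hi, mul_one] at this
  · intro j hj hji
    rw [Lagrange.eval_basis_of_ne (Ne.symm hji) hj, mul_zero]
  · intro h'; exact absurd hi h'

theorem stmt12 (M N : ℕ) (hM : 0 < M) (hN : 0 < N) :
    LinearIndependent ℂ (fun p : ℤ × Fin M => fun j : ℤ =>
      Complex.exp (2 * Real.pi * Complex.I * (j : ℂ) * (p.2.1 : ℂ) / (M : ℂ)) *
        (Real.exp (-((j : ℝ) - (p.1 : ℝ) * (N : ℝ)) ^ 2) : ℂ)) := by
  classical
  rw [linearIndependent_iff']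
  intro s g hsum p hp
  set c : ℤ × Fin M → ℂ := fun q => if q ∈ s then g q else 0 with hc
  set T : Finset ℤ := s.image Prod.fst with hT
  have hMC : (M : ℂ) ≠ 0 := Nat.cast_ne_zero.2 hM.ne'
  have hfun : ∀ j : ℤ, ∑ q ∈ s, g q *
      (Complex.exp (2 * Real.pi * Complex.I * (j : ℂ) * (q.2.1 : ℂ) / (M : ℂ)) *
        (Real.exp (-((j : ℝ) - (q.1 : ℝ) * (N : ℝ)) ^ 2) : ℂ)) = 0 := by
    intro j
    have := congrFun hsum j
    simpa [Finset.sum_apply] using this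
  set E : ℤ → ℤ → ℂ := fun n r => ∑ m : Fin M,
      c (n, m) * Complex.exp (2 * Real.pi * Complex.I * (r : ℂ) * (m.1 : ℂ) / (M : ℂ)) with hE
  -- Step A
  have h1 : ∀ j : ℤ, ∑ n ∈ T, E n j *
      (Real.exp (2 * (j : ℝ) * ((n : ℝ) * N) - ((n : ℝ) * N) ^ 2) : ℂ) = 0 := by
    intro j
    have hsub : s ⊆ T ×ˢ (Finset.univ : Finset (Fin M)) := by
      intro q hq
      exact Finset.mem_product.2 ⟨Finset.mem_image_of_mem _ hq, Finset.mem_univ _⟩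
    have e0 : ∑ q ∈ T ×ˢ (Finset.univ : Finset (Fin M)), c q *
        (Complex.exp (2 * Real.pi * Complex.I * (j : ℂ) * (q.2.1 : ℂ) / (M : ℂ)) *
          (Real.exp (-((j : ℝ) - (q.1 : ℝ) * (N : ℝ)) ^ 2) : ℂ)) = 0 := by
      rw [← Finset.sum_subset hsub (fun q _ hq => by simp [hc, hq])]
      rw [← hfun j]
      exact Finset.sum_congr rfl fun q hq => by simp [hc, hq]
    rw [Finset.sum_product] at e0
    have key : ∀ n ∈ T, ∑ m : Fin M, c (n, m) *
        (Complex.exp (2 * Real.pi * Complex.I * (j : ℂ) * (m.1 : ℂ) / (M : ℂ)) *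
          (Real.exp (-((j : ℝ) - (n : ℝ) * (N : ℝ)) ^ 2) : ℂ)) =
        (Real.exp (-(j : ℝ) ^ 2) : ℂ) * (E n j *
          (Real.exp (2 * (j : ℝ) * ((n : ℝ) * N) - ((n : ℝ) * N) ^ 2) : ℂ)) := by
      intro n _
      have hex : (Real.exp (-((j : ℝ) - (n : ℝ) * (N : ℝ)) ^ 2) : ℝ) =
          Real.exp (-(j : ℝ) ^ 2) * Real.exp (2 * (j : ℝ) * ((n : ℝ) * N) - ((n : ℝ) * N) ^ 2) := by
        rw [← Real.exp_add]; ring_nf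
      rw [hE]
      push_cast [hex]
      rw [Finset.sum_mul, Finset.mul_sum]
      apply Finset.sum_congr rfl; intro m _
      ring
    rw [Finset.sum_congr rfl key, ← Finset.mul_sum] at e0
    rcases mul_eq_zero.1 e0 with h | h
    · exact absurd h (by exact_mod_cast Real.exp_ne_zero _)
    · exact h
  -- Step B
  have hEzero : ∀ n ∈ T, ∀ r : ℤ, E n r = 0 := by
    intro n hn r
    have hk : ∀ k : ℕ, ∑ n' ∈ T,
        (E n' r * (Real.exp (2 * (r : ℝ) * ((n' : ℝ) * N) - ((n' : ℝ) * N) ^ 2) : ℂ)) *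
          ((Real.exp (2 * (n' : ℝ) * N * M) : ℂ)) ^ k = 0 := by
      intro k
      have hmain := h1 (r + (k : ℤ) * M)
      rw [← hmain]
      apply Finset.sum_congr rfl
      intro n' _
      have hper : E n' (r + (k : ℤ) * M) = E n' r := by
        rw [hE]
        apply Finset.sum_congr rfl; intro m _
        congr 1
        rw [show 2 * (Real.pi : ℂ) * Complex.I * (((r + (k : ℤ) * M : ℤ)) : ℂ) * (m.1 : ℂ) / (M : ℂ)
            = 2 * (Real.pi : ℂ) * Complex.I * (r : ℂ) * (m.1 : ℂ) / (M : ℂ)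
              + (((k : ℤ) * m.1 : ℤ) : ℂ) * (2 * Real.pi * Complex.I) from by
          field_simp
          push_cast
          ring]
        rw [Complex.exp_add, Complex.exp_int_mul_two_pi_mul_I, mul_one]
      have hre : Real.exp (2 * (((r + (k : ℤ) * M : ℤ)) : ℝ) * ((n' : ℝ) * N) - ((n' : ℝ) * N) ^ 2)
          = Real.exp (2 * (r : ℝ) * ((n' : ℝ) * N) - ((n' : ℝ) * N) ^ 2) *
            (Real.exp (2 * (n' : ℝ) * N * M)) ^ k := by
        rw [← Real.exp_nat_mul, ← Real.exp_add]
        congr 1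
        push_cast
        ring
      rw [hper, hre]
      push_cast [Complex.ofReal_exp]
      ring
    have hinj : Set.InjOn (fun n' : ℤ => ((Real.exp (2 * (n' : ℝ) * N * M) : ℝ) : ℂ)) T := by
      intro a _ b _ hab
      have h2 : Real.exp (2 * (a : ℝ) * N * M) = Real.exp (2 * (b : ℝ) * N * M) :=
        Complex.ofReal_injective (by simpa using hab)
      have h3 : 2 * (a : ℝ) * N * M = 2 * (b : ℝ) * N * M := Real.exp_injective h2
      have hNM : (2 : ℝ) * N * M ≠ 0 := by positivity
      have h4 : (a : ℝ) = b := by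
        have := mul_right_cancel₀ hNM (by linarith [h3] : (a : ℝ) * (2 * N * M) = (b : ℝ) * (2 * N * M))
        exact this
      exact_mod_cast h4
    have := vand T _ hinj _ hk n hn
    rcases mul_eq_zero.1 this with h | h
    · exact h
    · exact absurd h (by exact_mod_cast Real.exp_ne_zero _)
  -- Step C
  have hczero : ∀ n ∈ T, ∀ m : Fin M, c (n, m) = 0 := by
    intro n hn m
    have hζ : IsPrimitiveRoot (Complex.exp (2 * Real.pi * Complex.I / M)) M :=
      Complex.isPrimitiveRoot_exp M hM.ne'
    have hk : ∀ k : ℕ, ∑ m' : Fin M,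
        c (n, m') * ((Complex.exp (2 * Real.pi * Complex.I / M)) ^ m'.1) ^ k = 0 := by
      intro k
      have hzero := hEzero n hn (k : ℤ)
      rw [hE] at hzero
      rw [← hzero]
      apply Finset.sum_congr rfl; intro m' _
      congr 1
      rw [← pow_mul, ← Complex.exp_nat_mul]
      congr 1
      push_cast
      ring
    have hinj : Set.InjOn (fun m' : Fin M =>
        (Complex.exp (2 * Real.pi * Complex.I / M)) ^ m'.1) (Finset.univ : Finset (Fin M)) := by
      intro a _ b _ hab
      exact Fin.ext (hζ.pow_inj a.2 b.2 hab)
    exact vand Finset.univ _ hinj _ hk m (Finset.mem_univ m)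
  have hp1 : p.1 ∈ T := Finset.mem_image_of_mem _ hp
  have := hczero p.1 hp1 p.2
  rw [hc] at this
  simpa [hp] using this
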